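/- Let L be the Laplacian of a connected weighted digraph on N nodes with reachable node i_R. Then there exists a positive diagonal matrix D such that D L + L^T D + 2 D e_{i_R} e_{i_R}^T > 2 I (in the positive-definite order). -/

import Mathlib

open Matrix

open Finset in
lemma key_posdef {N : ℕ} (A : Matrix (Fin N) (Fin N) ℝ)
    (hsymm : Aᵀ = A) (hoff : ∀ i j, i ≠ j → A i j ≤ 0)
    (w : Fin N → ℝ) (hw : ∀ i, 0 < w i)
    (hAw : ∀ i, 0 < (A *ᵥ w) i) : A.PosDef := by
  have hsymm' : ∀ i j, A j i = A i j := by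
    intro i j
    conv_lhs => rw [← hsymm]
    rw [transpose_apply]
  rw [posDef_iff_dotProduct_mulVec]
  constructor
  · ext i j
    simp only [conjTranspose_apply, star_trivial]
    exact hsymm' i j
  · intro x hx
    have hx' : ∃ i, x i ≠ 0 := Function.ne_iff.mp hx
    have hwne : ∀ i, w i ≠ 0 := fun i => (hw i).ne'
    set T1 : ℝ := ∑ i, (A *ᵥ w) i * x i ^ 2 / w i with hT1def
    have hT1pos : 0 < T1 := by
      obtain ⟨i0, hi0⟩ := hx'
      apply Finset.sum_pos'
      · intro i _
        exact div_nonneg (mul_nonneg (hAw i).le (sq_nonneg _)) (hw i).le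
      · refine ⟨i0, Finset.mem_univ _, ?_⟩
        have hx2 : 0 < x i0 ^ 2 := lt_of_le_of_ne (sq_nonneg _) (Ne.symm (pow_ne_zero 2 hi0))
        exact div_pos (mul_pos (hAw i0) hx2) (hw i0)
    set S2 : ℝ := ∑ i, ∑ j, (-A i j) * (w i * w j * (x i / w i - x j / w j)^2) with hS2def
    have hS2nn : 0 ≤ S2 := by
      apply Finset.sum_nonneg; intro i _
      apply Finset.sum_nonneg; intro j _
      rcases eq_or_ne i j with rfl | hij
      · simp
      · exact mul_nonneg (neg_nonneg.mpr (hoff i j hij))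
          (mul_nonneg (mul_nonneg (hw i).le (hw j).le) (sq_nonneg _))
    -- expand each S2 term
    have e1 : ∀ i j, (-A i j) * (w i * w j * (x i / w i - x j / w j)^2)
        = -(A i j * (w j * x i ^ 2 / w i)) + -(A i j * (w i * x j ^ 2 / w j))
          + 2 * (A i j * (x i * x j)) := by
      intro i j
      field_simp [hwne i, hwne j]
      ring
    have hUU' : (∑ i, ∑ j, A i j * (w i * x j ^ 2 / w j))
        = ∑ i, ∑ j, A i j * (w j * x i ^ 2 / w i) := by
      rw [Finset.sum_comm]
      refine Finset.sum_congr rfl fun i _ => Finset.sum_congr rfl fun j _ => ?_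
      rw [hsymm' j i]
    have hS2eq : S2 = -(∑ i, ∑ j, A i j * (w j * x i ^ 2 / w i))
        - (∑ i, ∑ j, A i j * (w i * x j ^ 2 / w j))
        + 2 * (∑ i, ∑ j, A i j * (x i * x j)) := by
      rw [hS2def]
      simp only [e1, Finset.sum_add_distrib, Finset.sum_neg_distrib, ← Finset.mul_sum]
      ring
    have hT1eq : T1 = ∑ i, ∑ j, A i j * (w j * x i ^ 2 / w i) := by
      rw [hT1def]
      refine Finset.sum_congr rfl fun i _ => ?_
      rw [show (A *ᵥ w) i = ∑ j, A i j * w j from by simp [mulVec, dotProduct]]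
      rw [Finset.sum_mul, Finset.sum_div]
      exact Finset.sum_congr rfl fun j _ => by ring
    have hP : (star x) ⬝ᵥ (A *ᵥ x) = ∑ i, ∑ j, A i j * (x i * x j) := by
      simp only [star_trivial, dotProduct, mulVec, Finset.mul_sum]
      exact Finset.sum_congr rfl fun i _ => Finset.sum_congr rfl fun j _ => by ring
    have : (star x) ⬝ᵥ (A *ᵥ x) = T1 + S2 / 2 := by
      rw [hP, hT1eq]
      rw [hUU'] at hS2eq
      linarith
    rw [this]
    positivity

lemma exists_left {N : ℕ} [Nonempty (Fin N)] (A : Matrix (Fin N) (Fin N) ℝ)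
    (hoff : ∀ i j, i ≠ j → A i j ≤ 0)
    (w : Fin N → ℝ) (hw : ∀ i, 0 < w i) (hAw : ∀ i, 0 < (A *ᵥ w) i) :
    ∃ v : Fin N → ℝ, (∀ i, 0 < v i) ∧ ∀ j, 0 < (Aᵀ *ᵥ v) j := by
  set s : ℝ := 1 + ∑ i, |A i i| with hsdef
  have habs : (0:ℝ) ≤ ∑ i, |A i i| := Finset.sum_nonneg fun i _ => abs_nonneg _
  have hs0 : 0 < s := by rw [hsdef]; linarith
  have hsd : ∀ i, A i i < s := by
    intro i
    have h1 : A i i ≤ |A i i| := le_abs_self _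
    have h2 : |A i i| ≤ ∑ j, |A j j| :=
      Finset.single_le_sum (fun j _ => abs_nonneg (A j j)) (Finset.mem_univ i)
    rw [hsdef]; linarith
  set B : Matrix (Fin N) (Fin N) ℝ := s • (1 : Matrix (Fin N) (Fin N) ℝ) - A with hBdef
  have hB : ∀ i j, 0 ≤ B i j := by
    intro i j
    rcases eq_or_ne i j with rfl | hij
    · have : B i i = s - A i i := by simp [hBdef]
      rw [this]; linarith [hsd i]
    · have : B i j = -A i j := by simp [hBdef, one_apply_ne hij]
      rw [this]; linarith [hoff i j hij]
  have hBw : ∀ i, (B *ᵥ w) i = s * w i - (A *ᵥ w) i := by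
    intro i
    rw [hBdef, sub_mulVec, smul_mulVec, one_mulVec]
    simp
  set θ : ℝ := Finset.univ.sup' Finset.univ_nonempty (fun i => 1 - (A *ᵥ w) i / (s * w i)) with hθdef
  have hθlt : θ < 1 := by
    rw [hθdef, Finset.sup'_lt_iff]
    intro i _
    have : 0 < (A *ᵥ w) i / (s * w i) := div_pos (hAw i) (mul_pos hs0 (hw i))
    linarith
  have hθb : ∀ i, (B *ᵥ w) i ≤ θ * (s * w i) := by
    intro i
    have h1 : 1 - (A *ᵥ w) i / (s * w i) ≤ θ :=
      Finset.le_sup' (f := fun i => 1 - (A *ᵥ w) i / (s * w i)) (Finset.mem_univ i)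
    have hsw : (0:ℝ) < s * w i := mul_pos hs0 (hw i)
    have h2 : (1 - (A *ᵥ w) i / (s * w i)) * (s * w i) = s * w i - (A *ᵥ w) i := by
      field_simp [(hw i).ne']
    rw [hBw i, ← h2]
    exact mul_le_mul_of_nonneg_right h1 hsw.le
  have hθ0 : 0 ≤ θ := by
    obtain ⟨i⟩ := ‹Nonempty (Fin N)›
    have hBwnn : 0 ≤ (B *ᵥ w) i := by
      rw [show (B *ᵥ w) i = ∑ j, B i j * w j from rfl]
      exact Finset.sum_nonneg fun j _ => mul_nonneg (hB i j) (hw j).le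
    have := (hBwnn.trans (hθb i))
    have hsw : (0:ℝ) < s * w i := mul_pos hs0 (hw i)
    nlinarith
  -- powers of B
  have hpow : ∀ n : ℕ, (∀ i j, 0 ≤ (B ^ n) i j) ∧ ∀ i, (B ^ n *ᵥ w) i ≤ (θ * s) ^ n * w i := by
    intro n
    induction n with
    | zero =>
      constructor
      · intro i j
        rcases eq_or_ne i j with rfl | hij
        · simp
        · simp [one_apply_ne hij]
      · intro i; simp
    | succ n ih =>
      obtain ⟨ihnn, ihb⟩ := ih
      have hmul : B ^ (n+1) = B * B ^ n := by rw [pow_succ']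
      constructor
      · intro i j
        rw [hmul, mul_apply]
        exact Finset.sum_nonneg fun k _ => mul_nonneg (hB i k) (ihnn k j)
      · intro i
        rw [hmul, ← mulVec_mulVec]
        have step1 : (B *ᵥ (B ^ n *ᵥ w)) i ≤ (θ * s) ^ n * (B *ᵥ w) i := by
          rw [show (B *ᵥ w) i = ∑ j, B i j * w j from rfl, Finset.mul_sum,
            show (B *ᵥ (B ^ n *ᵥ w)) i = ∑ j, B i j * (B ^ n *ᵥ w) j from rfl]
          refine Finset.sum_le_sum fun j _ => ?_
          calc B i j * (B ^ n *ᵥ w) j ≤ B i j * ((θ * s) ^ n * w j) :=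
                mul_le_mul_of_nonneg_left (ihb j) (hB i j)
            _ = (θ * s) ^ n * (B i j * w j) := by ring
        have step2 : (θ * s) ^ n * (B *ᵥ w) i ≤ (θ * s) ^ n * (θ * (s * w i)) :=
          mul_le_mul_of_nonneg_left (hθb i) (pow_nonneg (mul_nonneg hθ0 hs0.le) n)
        calc (B *ᵥ (B ^ n *ᵥ w)) i ≤ (θ * s) ^ n * (B *ᵥ w) i := step1
          _ ≤ (θ * s) ^ n * (θ * (s * w i)) := step2
          _ = (θ * s) ^ (n+1) * w i := by ring
  -- entry bound
  have hentry : ∀ n i j, (B ^ n) i j * w j ≤ (θ * s) ^ n * w i := by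
    intro n i j
    have h1 : (B ^ n) i j * w j ≤ (B ^ n *ᵥ w) i := by
      rw [show (B ^ n *ᵥ w) i = ∑ k, (B ^ n) i k * w k from rfl]
      exact Finset.single_le_sum
        (fun k _ => mul_nonneg ((hpow n).1 i k) (hw k).le) (Finset.mem_univ j)
    exact h1.trans ((hpow n).2 i)
  -- choose exponent
  set wm : ℝ := Finset.univ.inf' Finset.univ_nonempty w with hwmdef
  have hwm0 : 0 < wm := by
    rw [hwmdef, Finset.lt_inf'_iff]
    exact fun i _ => hw i
  have hwmle : ∀ j, wm ≤ w j := fun j => Finset.inf'_le w (Finset.mem_univ j)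
  set W : ℝ := ∑ i, w i with hWdef
  have hW0 : 0 < W := Finset.sum_pos (fun i _ => hw i) Finset.univ_nonempty
  obtain ⟨n0, hn0⟩ := exists_pow_lt_of_lt_one (div_pos hwm0 hW0) hθlt
  set m : ℕ := n0 + 1 with hmdef
  have hθm : θ ^ m * W < wm := by
    have h1 : θ ^ m ≤ θ ^ n0 := by
      rw [hmdef, pow_succ]
      nlinarith [pow_nonneg hθ0 n0]
    have h2 : θ ^ n0 * W < wm := (lt_div_iff₀ hW0).mp hn0
    calc θ ^ m * W ≤ θ ^ n0 * W := mul_le_mul_of_nonneg_right h1 hW0.le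
      _ < wm := h2
  -- define v
  set u : ℕ → (Fin N → ℝ) := fun k => (B ^ k)ᵀ *ᵥ (fun _ => 1) with hudef
  have hu0 : u 0 = fun _ => (1:ℝ) := by
    funext j
    simp [hudef, mulVec, dotProduct, one_apply]
  have hunn : ∀ k j, 0 ≤ u k j := by
    intro k j
    rw [show u k j = ∑ i, (B ^ k) i j * 1 from rfl]
    exact Finset.sum_nonneg fun i _ => mul_nonneg ((hpow k).1 i j) zero_le_one
  have husucc : ∀ k, Bᵀ *ᵥ u k = u (k + 1) := by
    intro k
    rw [hudef]
    simp only
    rw [mulVec_mulVec, ← transpose_mul, ← pow_succ]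
  set v : Fin N → ℝ := ∑ k ∈ Finset.range m, (s⁻¹) ^ (k+1) • u k with hvdef
  have hvapp : ∀ j, v j = ∑ k ∈ Finset.range m, (s⁻¹) ^ (k+1) * u k j := by
    intro j
    rw [hvdef, Finset.sum_apply]
    simp
  refine ⟨v, ?_, ?_⟩
  · intro j
    rw [hvapp]
    apply Finset.sum_pos'
    · intro k _
      exact mul_nonneg (pow_nonneg (inv_nonneg.mpr hs0.le) _) (hunn k j)
    · refine ⟨0, Finset.mem_range.mpr (by omega), ?_⟩
      rw [hu0]
      simp
      positivity
  · intro j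
    have hAT : Aᵀ = s • (1 : Matrix (Fin N) (Fin N) ℝ) - Bᵀ := by
      rw [hBdef]
      rw [transpose_sub, transpose_smul, transpose_one, sub_sub_cancel]
    have hBv : Bᵀ *ᵥ v = ∑ k ∈ Finset.range m, (s⁻¹) ^ (k+1) • u (k+1) := by
      rw [hvdef]
      rw [show Bᵀ *ᵥ (∑ k ∈ Finset.range m, (s⁻¹) ^ (k+1) • u k)
        = ∑ k ∈ Finset.range m, (s⁻¹) ^ (k+1) • (Bᵀ *ᵥ u k) from by
          rw [← Matrix.mulVecLin_apply]
          rw [_root_.map_sum (Matrix.mulVecLin Bᵀ) _ (Finset.range m)]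
          refine Finset.sum_congr rfl fun k _ => ?_
          rw [LinearMap.map_smul, Matrix.mulVecLin_apply]]
      exact Finset.sum_congr rfl fun k _ => by rw [husucc]
    have htel : (Aᵀ *ᵥ v) j = 1 - (s⁻¹) ^ m * u m j := by
      rw [hAT, sub_mulVec, smul_mulVec, one_mulVec, hBv]
      rw [Pi.sub_apply, Pi.smul_apply, smul_eq_mul, hvapp, Finset.sum_apply,
        Finset.mul_sum]
      simp only [Pi.smul_apply, smul_eq_mul]
      have : ∀ k, s * ((s⁻¹) ^ (k+1) * u k j) = (s⁻¹) ^ k * u k j := by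
        intro k
        rw [pow_succ]
        field_simp
      rw [show (∑ k ∈ Finset.range m, s * ((s⁻¹) ^ (k+1) * u k j))
          = ∑ k ∈ Finset.range m, (s⁻¹) ^ k * u k j from
        Finset.sum_congr rfl fun k _ => this k]
      rw [show (∑ k ∈ Finset.range m, (s⁻¹) ^ k * u k j)
            - ∑ k ∈ Finset.range m, (s⁻¹) ^ (k+1) * u (k+1) j
          = ∑ k ∈ Finset.range m, ((s⁻¹) ^ k * u k j - (s⁻¹) ^ (k+1) * u (k+1) j) from
        (Finset.sum_sub_distrib _ _).symm]
      rw [Finset.sum_range_sub' (fun k => (s⁻¹) ^ k * u k j) m]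
      rw [hu0]
      simp
    rw [htel]
    have hub : u m j ≤ (θ * s) ^ m * W / w j := by
      have h1 : ∀ i, (B ^ m) i j ≤ (θ * s) ^ m * w i / w j := by
        intro i
        rw [le_div_iff₀ (hw j)]
        exact hentry m i j
      calc u m j = ∑ i, (B ^ m) i j := by
            rw [show u m j = ∑ i, (B ^ m) i j * 1 from rfl]; simp
        _ ≤ ∑ i, (θ * s) ^ m * w i / w j := Finset.sum_le_sum fun i _ => h1 i
        _ = (θ * s) ^ m * W / w j := by
            rw [hWdef, Finset.mul_sum, Finset.sum_div]
    have hfin : (s⁻¹) ^ m * u m j ≤ θ ^ m * W / w j := by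
      have heq : (s⁻¹) ^ m * ((θ * s) ^ m * W / w j) = θ ^ m * W / w j := by
        have hsm : (s:ℝ) ^ m ≠ 0 := pow_ne_zero m hs0.ne'
        rw [mul_pow, inv_pow]
        rw [show θ ^ m * s ^ m * W / w j = s ^ m * (θ ^ m * W / w j) by ring]
        exact inv_mul_cancel_left₀ hsm _
      calc (s⁻¹) ^ m * u m j ≤ (s⁻¹) ^ m * ((θ * s) ^ m * W / w j) :=
            mul_le_mul_of_nonneg_left hub (pow_nonneg (inv_nonneg.mpr hs0.le) m)
        _ = θ ^ m * W / w j := heq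
    have hlt : θ ^ m * W / w j < 1 := by
      rw [div_lt_one (hw j)]
      exact hθm.trans_le (hwmle j)
    linarith


/-- reachability to `iR` within `k` steps along positive edges of `a` -/
def stmt17reach {N : ℕ} (a : Fin N → Fin N → ℝ) (iR : Fin N) : ℕ → Fin N → Prop
  | 0, i => i = iR
  | k+1, i => i = iR ∨ ∃ j, 0 < a i j ∧ stmt17reach a iR k j

lemma exists_w {N : ℕ} (a : Fin N → Fin N → ℝ) (hnn : ∀ i j, 0 ≤ a i j) (iR : Fin N)
    (hconn : ∀ j, Relation.ReflTransGen (fun u v => 0 < a u v) j iR) :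
    ∃ w : Fin N → ℝ, (∀ i, 0 < w i) ∧
      ∀ i, 0 < (∑ j, a i j * (w i - w j)) + (if i = iR then w i else 0) := by
  classical
  have hreach : ∀ i, ∃ k, stmt17reach a iR k i := by
    intro i
    induction hconn i using Relation.ReflTransGen.head_induction_on with
    | refl => exact ⟨0, rfl⟩
    | head h _ ih =>
      obtain ⟨k, hk⟩ := ih
      exact ⟨k + 1, Or.inr ⟨_, h, hk⟩⟩
  set ρ : Fin N → ℕ := fun i => Nat.find (hreach i) with hρdef
  have hρspec : ∀ i, stmt17reach a iR (ρ i) i := fun i => Nat.find_spec (hreach i)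
  have hρ0 : ρ iR = 0 := by
    rw [hρdef]
    exact Nat.eq_zero_of_le_zero (Nat.find_le (rfl : stmt17reach a iR 0 iR))
  have hstep : ∀ i, i ≠ iR → ∃ j, 0 < a i j ∧ ρ j + 1 ≤ ρ i := by
    intro i hi
    have h1 := hρspec i
    rcases hm : ρ i with _ | m
    · rw [hm] at h1
      exact absurd h1 hi
    · rw [hm] at h1
      rcases h1 with h1 | ⟨j, haj, hrj⟩
      · exact absurd h1 hi
      · exact ⟨j, haj, by
          have : ρ j ≤ m := Nat.find_le hrj
          omega⟩
  -- global quantities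
  set S : ℝ := ∑ i, ∑ j, a i j with hSdef
  have hS0 : 0 ≤ S := Finset.sum_nonneg fun i _ => Finset.sum_nonneg fun j _ => hnn i j
  have hrowS : ∀ i, ∑ j, a i j ≤ S :=
    fun i => Finset.single_le_sum
      (f := fun i => ∑ j, a i j)
      (fun i _ => Finset.sum_nonneg fun j _ => hnn i j) (Finset.mem_univ i)
  -- θ with the edge property
  obtain ⟨θ, hθ0, hθ1, hθedge⟩ :
      ∃ θ : ℝ, 0 < θ ∧ θ < 1 ∧ ∀ i j, 0 < a i j → S * θ < a i j * (1 - θ) := by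
    set E : Finset (Fin N × Fin N) :=
      Finset.univ.filter (fun p => 0 < a p.1 p.2) with hEdef
    by_cases hE : E.Nonempty
    · set amin : ℝ := E.inf' hE (fun p => a p.1 p.2) with hamindef
      have hamin0 : 0 < amin := by
        rw [hamindef, Finset.lt_inf'_iff]
        intro p hp
        exact (Finset.mem_filter.mp hp).2
      have haminle : ∀ i j, 0 < a i j → amin ≤ a i j := by
        intro i j hij
        exact Finset.inf'_le (fun p => a p.1 p.2) (by simp [hEdef, hij] :
          (i, j) ∈ E)
      refine ⟨amin / (amin + S + 1), ?_, ?_, ?_⟩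
      · positivity
      · rw [div_lt_one (by linarith)]
        linarith
      · intro i j hij
        have hle := haminle i j hij
        have hD : (0:ℝ) < amin + S + 1 := by linarith
        have h1m : 1 - amin / (amin + S + 1) = (S + 1) / (amin + S + 1) := by
          field_simp
          ring
        rw [h1m, ← mul_div_assoc, ← mul_div_assoc, div_lt_div_iff₀ hD hD]
        have h2 : S * amin < a i j * (S + 1) := by
          nlinarith [mul_le_mul_of_nonneg_right hle (show (0:ℝ) ≤ S + 1 by linarith)]
        exact mul_lt_mul_of_pos_right h2 hD
    · refine ⟨1/2, by norm_num, by norm_num, ?_⟩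
      intro i j hij
      exact absurd (⟨(i, j), by simp [hEdef, hij]⟩ : E.Nonempty) hE
  have hθle1 : θ ≤ 1 := hθ1.le
  set w : Fin N → ℝ := fun i => (S + 2) - θ ^ (ρ i) with hwdef
  have hwpos : ∀ i, 0 < w i := by
    intro i
    have h1 : θ ^ (ρ i) ≤ 1 := pow_le_one₀ hθ0.le hθle1
    rw [hwdef]
    simp only
    linarith
  refine ⟨w, hwpos, ?_⟩
  intro i
  have hdiff : ∀ i' j : Fin N, w i' - w j = θ ^ (ρ j) - θ ^ (ρ i') := by
    intro i' j
    rw [hwdef]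
    simp only
    ring
  by_cases hi : i = iR
  · -- i = iR case
    rw [if_pos hi, hi]
    have hwiR : w iR = S + 1 := by
      rw [hwdef]
      simp only [hρ0, pow_zero]
      ring
    have hbound : ∀ j, -(a iR j) ≤ a iR j * (w iR - w j) := by
      intro j
      rw [hdiff, hρ0, pow_zero]
      nlinarith [hnn iR j, pow_nonneg hθ0.le (ρ j), pow_le_one₀ hθ0.le hθle1 (n := ρ j)]
    have hsum : -(∑ j, a iR j) ≤ ∑ j, a iR j * (w iR - w j) := by
      rw [← Finset.sum_neg_distrib]
      exact Finset.sum_le_sum fun j _ => hbound j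
    have := hrowS iR
    linarith [hwiR]
  · -- i ≠ iR case
    rw [if_neg hi, add_zero]
    obtain ⟨j0, haj0, hρj0⟩ := hstep i hi
    obtain ⟨m, hm⟩ : ∃ m, ρ i = m + 1 := ⟨ρ i - 1, by omega⟩
    have hj0le : ρ j0 ≤ m := by omega
    have hθm0 : (0:ℝ) < θ ^ m := pow_pos hθ0 m
    -- split off the j0 term
    rw [← Finset.add_sum_erase _ _ (Finset.mem_univ j0)]
    have hterm0 : a i j0 * θ ^ m * (1 - θ) ≤ a i j0 * (w i - w j0) := by
      rw [hdiff, hm]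
      have h1 : θ ^ m ≤ θ ^ (ρ j0) := pow_le_pow_of_le_one hθ0.le hθle1 hj0le
      have h2 : θ ^ (m + 1) = θ ^ m * θ := pow_succ θ m
      nlinarith [hnn i j0]
    have hrest : -(θ ^ (m+1)) * ∑ j ∈ Finset.univ.erase j0, a i j
        ≤ ∑ j ∈ Finset.univ.erase j0, a i j * (w i - w j) := by
      rw [Finset.mul_sum]
      refine Finset.sum_le_sum fun j _ => ?_
      rw [hdiff, hm]
      nlinarith [hnn i j, pow_nonneg hθ0.le (ρ j), pow_pos hθ0 (m+1)]
    have hrest2 : ∑ j ∈ Finset.univ.erase j0, a i j ≤ S := by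
      refine le_trans ?_ (hrowS i)
      exact Finset.sum_le_sum_of_subset_of_nonneg
        (Finset.erase_subset _ _) (fun j _ _ => hnn i j)
    have hedge := hθedge i j0 haj0
    have hkey : 0 < a i j0 * θ ^ m * (1 - θ) - θ ^ (m+1) * S := by
      have h3 : θ ^ (m+1) = θ ^ m * θ := pow_succ θ m
      have h4 : 0 < θ ^ m * (a i j0 * (1 - θ) - S * θ) := by
        apply mul_pos hθm0
        linarith
      nlinarith
    have hrest3 : -(θ ^ (m+1)) * ∑ j ∈ Finset.univ.erase j0, a i j
        ≥ -(θ ^ (m+1)) * S := by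
      have : (0:ℝ) ≤ θ ^ (m+1) := pow_nonneg hθ0.le _
      nlinarith
    linarith

/-- For the Laplacian L of a connected weighted digraph with reachable
node iR, there is a positive diagonal D with DL + LᵀD + 2 D e_{iR} e_{iR}ᵀ > 2I. -/
theorem stmt17 {N : ℕ} (a : Fin N → Fin N → ℝ)
    (hnn : ∀ i j, 0 ≤ a i j) (hdiag : ∀ i, a i i = 0)
    (L : Matrix (Fin N) (Fin N) ℝ)
    (hL : ∀ i j, L i j = (if i = j then ∑ k, a i k else 0) - a i j)
    (iR : Fin N)
    (hconn : ∀ j, Relation.ReflTransGen (fun u v => 0 < a u v) j iR) :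
    ∃ d : Fin N → ℝ, (∀ i, 0 < d i) ∧
      (Matrix.diagonal d * L + Lᵀ * Matrix.diagonal d +
        (2 : ℝ) • (Matrix.diagonal d * Matrix.single iR iR 1) -
        (2 : ℝ) • (1 : Matrix (Fin N) (Fin N) ℝ)).PosDef := by
  rcases isEmpty_or_nonempty (Fin N) with hN | hN
  · refine ⟨fun _ => 1, fun i => one_pos, ?_, ?_⟩
    · ext i j
      exact absurd i.2 (by exact fun _ => IsEmpty.false i)
    · intro x hx
      exact absurd (Finsupp.ext fun i => (IsEmpty.false i).elim) hx
  · set E : Matrix (Fin N) (Fin N) ℝ := Matrix.single iR iR 1 with hEdef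
    set M : Matrix (Fin N) (Fin N) ℝ := L + E with hMdef
    -- off-diagonal entries of M are nonpositive
    have hEapp : ∀ i j, E i j = if i = iR ∧ j = iR then 1 else 0 := by
      intro i j
      rw [hEdef, Matrix.single]
      simp only [of_apply]
      by_cases h1 : i = iR <;> by_cases h2 : j = iR
      · simp [h1, h2]
      · simp [h1, h2, (Ne.symm h2 : ¬ iR = j)]
      · simp [h1, h2, (Ne.symm h1 : ¬ iR = i)]
      · simp [h1, h2, (Ne.symm h1 : ¬ iR = i)]
    have hMoff : ∀ i j, i ≠ j → M i j ≤ 0 := by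
      intro i j hij
      rw [hMdef, Matrix.add_apply, hL, hEapp, if_neg hij]
      have : ¬(i = iR ∧ j = iR) := by
        rintro ⟨rfl, rfl⟩; exact hij rfl
      rw [if_neg this]
      have := hnn i j
      linarith
    -- get w
    obtain ⟨w, hwpos, hw⟩ := exists_w a hnn iR hconn
    have hMw : ∀ i, 0 < (M *ᵥ w) i := by
      intro i
      have hExp : (M *ᵥ w) i
          = (∑ j, a i j * (w i - w j)) + (if i = iR then w i else 0) := by
        rw [show (M *ᵥ w) i = ∑ j, M i j * w j from rfl]
        have hterm : ∀ j, M i j * w j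
            = ((if i = j then ∑ k, a i k else 0) * w j - a i j * w j)
              + (if i = iR ∧ j = iR then 1 else 0) * w j := by
          intro j
          rw [hMdef, Matrix.add_apply, hL, hEapp]
          ring
        rw [Finset.sum_congr rfl fun j _ => hterm j]
        rw [Finset.sum_add_distrib, Finset.sum_sub_distrib]
        congr 1
        · have h1 : (∑ j, (if i = j then ∑ k, a i k else 0) * w j)
              = (∑ k, a i k) * w i := by
            rw [Finset.sum_eq_single i]
            · rw [if_pos rfl]
            · intro j _ hj
              rw [if_neg (Ne.symm hj), zero_mul]
            · intro h
              exact absurd (Finset.mem_univ i) h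
          rw [h1, Finset.sum_mul]
          rw [show (∑ j, a i j * (w i - w j))
              = ∑ j, (a i j * w i - a i j * w j) from
            Finset.sum_congr rfl fun j _ => by ring]
          rw [Finset.sum_sub_distrib]
        · rw [Finset.sum_eq_single iR]
          · by_cases h : i = iR <;> simp [h]
          · intro j _ hj
            rw [if_neg (by rintro ⟨_, rfl⟩; exact hj rfl), zero_mul]
          · intro h
            exact absurd (Finset.mem_univ iR) h
      rw [hExp]
      exact hw i
    -- get v
    obtain ⟨v, hvpos, hMv⟩ := exists_left M hMoff w hwpos hMw
    set d₀ : Fin N → ℝ := fun i => v i / w i with hd₀def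
    have hd₀pos : ∀ i, 0 < d₀ i := fun i => div_pos (hvpos i) (hwpos i)
    set A : Matrix (Fin N) (Fin N) ℝ := Matrix.diagonal d₀ * M + Mᵀ * Matrix.diagonal d₀
      with hAdef
    have hDw : Matrix.diagonal d₀ *ᵥ w = v := by
      funext i
      rw [mulVec_diagonal]
      rw [hd₀def]
      exact div_mul_cancel₀ (v i) (hwpos i).ne'
    have hAw : ∀ i, 0 < (A *ᵥ w) i := by
      intro i
      rw [hAdef, add_mulVec, ← mulVec_mulVec, ← mulVec_mulVec, hDw]
      rw [Pi.add_apply, mulVec_diagonal]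
      exact add_pos (mul_pos (hd₀pos i) (hMw i)) (hMv i)
    have hAsym : Aᵀ = A := by
      rw [hAdef, transpose_add, transpose_mul, transpose_mul, transpose_transpose,
        diagonal_transpose, add_comm]
    have hAoff : ∀ i j, i ≠ j → A i j ≤ 0 := by
      intro i j hij
      rw [hAdef, Matrix.add_apply, diagonal_mul, mul_diagonal, transpose_apply]
      have h1 : d₀ i * M i j ≤ 0 :=
        mul_nonpos_of_nonneg_of_nonpos (hd₀pos i).le (hMoff i j hij)
      have h2 : M j i * d₀ j ≤ 0 :=
        mul_nonpos_of_nonpos_of_nonneg (hMoff j i (Ne.symm hij)) (hd₀pos j).le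
      linarith
    -- scaling constant
    set c : ℝ := ∑ i, (2 * w i + 1) / (A *ᵥ w) i with hcdef
    have hcpos : 0 < c := by
      rw [hcdef]
      exact Finset.sum_pos (fun i _ => div_pos (by linarith [hwpos i]) (hAw i))
        Finset.univ_nonempty
    have hc : ∀ i, 2 * w i < c * (A *ᵥ w) i := by
      intro i
      have h1 : (2 * w i + 1) / (A *ᵥ w) i ≤ c := by
        rw [hcdef]
        refine Finset.single_le_sum (f := fun j => (2 * w j + 1) / (A *ᵥ w) j)
          (fun j _ => ?_) (Finset.mem_univ i)
        exact (div_pos (by linarith [hwpos j]) (hAw j)).le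
      have h2 : 2 * w i + 1 ≤ c * (A *ᵥ w) i := (div_le_iff₀ (hAw i)).mp h1
      linarith
    refine ⟨fun i => c * d₀ i, fun i => mul_pos hcpos (hd₀pos i), ?_⟩
    -- identify the goal matrix with c • A - 2 • 1
    have hdiagc : Matrix.diagonal (fun i => c * d₀ i) = c • Matrix.diagonal d₀ := by
      rw [show (fun i => c * d₀ i) = c • d₀ from rfl, diagonal_smul]
    have hED : Eᵀ * Matrix.diagonal d₀ = Matrix.diagonal d₀ * E := by
      ext i j
      rw [mul_diagonal, diagonal_mul, transpose_apply, hEapp, hEapp]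
      by_cases h1 : i = iR <;> by_cases h2 : j = iR <;>
        simp [h1, h2, and_comm]
    have hGoal : Matrix.diagonal (fun i => c * d₀ i) * L
          + Lᵀ * Matrix.diagonal (fun i => c * d₀ i)
          + (2 : ℝ) • (Matrix.diagonal (fun i => c * d₀ i) * Matrix.single iR iR 1)
          - (2 : ℝ) • (1 : Matrix (Fin N) (Fin N) ℝ)
        = c • A - (2 : ℝ) • (1 : Matrix (Fin N) (Fin N) ℝ) := by
      rw [hdiagc, ← hEdef, hAdef, hMdef]
      rw [transpose_add]
      rw [mul_add, add_mul, smul_add, smul_add]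
      rw [hED]
      rw [smul_mul_assoc, mul_smul_comm, smul_mul_assoc]
      module
    rw [hGoal]
    -- final posdef check
    refine key_posdef _ ?_ ?_ w hwpos ?_
    · rw [transpose_sub, transpose_smul, transpose_smul, transpose_one, hAsym]
    · intro i j hij
      rw [Matrix.sub_apply, Matrix.smul_apply, Matrix.smul_apply, one_apply_ne hij]
      have := hAoff i j hij
      have h1 : c * A i j ≤ 0 := mul_nonpos_of_nonneg_of_nonpos hcpos.le this
      simpa using h1
    · intro i
      rw [sub_mulVec, smul_mulVec, smul_mulVec, one_mulVec]
      rw [Pi.sub_apply, Pi.smul_apply, Pi.smul_apply, smul_eq_mul, smul_eq_mul]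
      have := hc i
      linarith
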